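/- Let (W,S) be a finite Coxeter system and K ⊆ S. The map η_K : w ↦ w_K (where w = w_K · ᴷw is the unique factorization with w_K ∈ W_K, l(w) = l(w_K) + l(ᴷw), and l(w_K) maximal) is a lattice homomorphism from the right weak order on W onto the right weak order on W_K. -/

import Mathlib

/-- One step up in the right weak order: multiply on the right by a simple
reflection, increasing length by one. -/
def weakStep {B W : Type*} [Group W] {M : CoxeterMatrix B} (cs : CoxeterSystem M W)
    (u w : W) : Prop :=
  ∃ i : B, w = u * cs.simple i ∧ cs.length w = cs.length u + 1

/-- The right weak order on a Coxeter group. -/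
def weakLE {B W : Type*} [Group W] {M : CoxeterMatrix B} (cs : CoxeterSystem M W) :
    W → W → Prop :=
  Relation.ReflTransGen (weakStep cs)

/-- `j` is the join of `x` and `y` in the weak order. -/
def isWeakJoin {B W : Type*} [Group W] {M : CoxeterMatrix B} (cs : CoxeterSystem M W)
    (x y j : W) : Prop :=
  weakLE cs x j ∧ weakLE cs y j ∧ ∀ z : W, weakLE cs x z → weakLE cs y z → weakLE cs j z

/-- `m` is the meet of `x` and `y` in the weak order. -/
def isWeakMeet {B W : Type*} [Group W] {M : CoxeterMatrix B} (cs : CoxeterSystem M W)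
    (x y m : W) : Prop :=
  weakLE cs m x ∧ weakLE cs m y ∧ ∀ z : W, weakLE cs z x → weakLE cs z y → weakLE cs z m



open List

attribute [local instance] Classical.propDecidable

namespace StmtSix

variable {B W : Type*} [Group W] {M : CoxeterMatrix B} (cs : CoxeterSystem M W)

local prefix:100 "ℓ" => cs.length
local prefix:100 "s" => cs.simple
local prefix:100 "π" => cs.wordProd
local prefix:100 "ris" => cs.rightInvSeq
local prefix:100 "lis" => cs.leftInvSeq

/-- Count occurrences mod 2. -/
noncomputable def cnt : List W → W → ZMod 2
  | [], _ => 0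
  | x :: l, t => (if t = x then 1 else 0) + cnt l t

@[simp] lemma cnt_nil (t : W) : cnt [] t = 0 := rfl

lemma cnt_cons (x : W) (l : List W) (t : W) :
    cnt (x :: l) t = (if t = x then 1 else 0) + cnt l t := rfl

lemma cnt_append (l l' : List W) (t : W) : cnt (l ++ l') t = cnt l t + cnt l' t := by
  induction l with
  | nil => simp
  | cons x l ih => simp [cnt_cons, ih, add_assoc]

lemma cnt_ne_zero_mem {l : List W} {t : W} (h : cnt l t ≠ 0) : t ∈ l := by
  induction l with
  | nil => simp at h
  | cons x l ih =>
    rw [cnt_cons] at h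
    by_cases hx : t = x
    · simp [hx]
    · simp only [hx, if_false, zero_add] at h
      exact mem_cons_of_mem _ (ih h)

lemma cnt_eq_one_of_nodup_mem {l : List W} {t : W} (hn : l.Nodup) (h : t ∈ l) :
    cnt l t = 1 := by
  induction l with
  | nil => simp at h
  | cons x l ih =>
    rw [cnt_cons]
    rcases mem_cons.mp h with rfl | hm
    · have : cnt l t = 0 := by
        by_contra hc
        exact (nodup_cons.mp hn).1 (cnt_ne_zero_mem hc)
      simp [this]
    · have hx : t ≠ x := by
        rintro rfl; exact (nodup_cons.mp hn).1 hm
      rw [if_neg hx, zero_add]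
      exact ih (nodup_cons.mp hn).2 hm

lemma cnt_map_conj (g : W) (l : List W) (t : W) :
    cnt (l.map (fun x => g * x * g⁻¹)) t = cnt l (g⁻¹ * t * g) := by
  induction l with
  | nil => simp
  | cons x l ih =>
    simp only [map_cons, cnt_cons, ih]
    congr 1
    have : t = g * x * g⁻¹ ↔ g⁻¹ * t * g = x := by
      constructor
      · rintro rfl; group
      · rintro rfl; group
    simp [this]

/-- The generators of the reflection cocycle action on `W × ZMod 2`. -/
noncomputable def act (i : B) : Function.End (W × ZMod 2) :=
  fun p => (s i * p.1 * s i, p.2 + if p.1 = s i then 1 else 0)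

/-- Action of a word. -/
lemma act_wordProd (ω : List B) (t : W) (ε : ZMod 2) :
    (ω.map (act cs)).prod (t, ε) = (π ω * t * (π ω)⁻¹, ε + cnt (ris ω) t) := by
  induction ω generalizing t ε with
  | nil =>
    show (1 : Function.End (W × ZMod 2)) (t, ε) = _
    simp [cnt_nil]
    rfl
  | cons i ω ih =>
    have hmul : (((i :: ω).map (act cs)).prod : Function.End (W × ZMod 2))
        = (act cs i) * ((ω.map (act cs)).prod) := by
      simp [List.prod_cons]
    rw [hmul]
    show (act cs i) (((ω.map (act cs)).prod) (t, ε)) = _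
    rw [ih]
    show (s i * (π ω * t * (π ω)⁻¹) * s i,
        (ε + cnt (ris ω) t) + if (π ω * t * (π ω)⁻¹) = s i then 1 else 0) = _
    rw [CoxeterSystem.wordProd_cons]
    have h1 : s i * (π ω * t * (π ω)⁻¹) * s i = s i * π ω * t * (s i * π ω)⁻¹ := by
      rw [mul_inv_rev, cs.inv_simple]; group
    have h2 : (ε + cnt (ris ω) t) + (if (π ω * t * (π ω)⁻¹) = s i then 1 else 0)
        = ε + cnt (ris (i :: ω)) t := by
      show _ = ε + cnt ((π ω)⁻¹ * (s i) * (π ω) :: ris ω) t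
      rw [cnt_cons]
      have : (π ω * t * (π ω)⁻¹ = s i) ↔ (t = (π ω)⁻¹ * s i * π ω) := by
        constructor
        · intro h
          rw [← h]; group
        · rintro rfl; group
      simp only [this]
      ring
    rw [h1, h2]

end StmtSix

namespace StmtSix

open CoxeterSystem List

variable {B W : Type*} [Group W] {M : CoxeterMatrix B} (cs : CoxeterSystem M W)

local prefix:100 "ℓ" => cs.length
local prefix:100 "s" => cs.simple
local prefix:100 "π" => cs.wordProd
local prefix:100 "ris" => cs.rightInvSeq
local prefix:100 "lis" => cs.leftInvSeq

lemma cnt_reverse (l : List W) (t : W) : cnt l.reverse t = cnt l t := by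
  induction l with
  | nil => simp
  | cons x l ih =>
    rw [reverse_cons, cnt_append, cnt_cons, cnt_cons, cnt_nil, ih]
    ring

section grp
variable {q a b : W}

lemma comm_pow (hq : b * q = q⁻¹ * b) (n : ℕ) : b * q ^ n = (q⁻¹) ^ n * b := by
  induction n with
  | zero => simp
  | succ n ih =>
    rw [pow_succ, ← mul_assoc, ih, mul_assoc, hq, ← mul_assoc, ← pow_succ]

lemma key_even (hq : b * q = q⁻¹ * b) (d : ℕ) :
    (q ^ d)⁻¹ * b * q ^ d = b * q ^ (2 * d) := by
  calc (q ^ d)⁻¹ * b * q ^ d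
      = (q⁻¹) ^ d * (b * q ^ d) := by rw [inv_pow, mul_assoc]
    _ = (q⁻¹) ^ d * ((q⁻¹) ^ d * b) := by rw [comm_pow hq]
    _ = ((q⁻¹) ^ d * (q⁻¹) ^ d) * b := by rw [mul_assoc]
    _ = (q⁻¹) ^ (2 * d) * b := by
        rw [← pow_add]
        have : d + d = 2 * d := by omega
        rw [this]
    _ = b * q ^ (2 * d) := (comm_pow hq _).symm

lemma key_odd (hb : b * b = 1) (hq : b * q = q⁻¹ * b) (d : ℕ) :
    (b * q ^ d)⁻¹ * (q * b) * (b * q ^ d) = b * q ^ (2 * d + 1) := by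
  have hb' : b⁻¹ = b := inv_eq_of_mul_eq_one_right hb
  calc (b * q ^ d)⁻¹ * (q * b) * (b * q ^ d)
      = (q⁻¹) ^ d * (b⁻¹ * (q * b) * b) * q ^ d := by
        rw [mul_inv_rev, inv_pow]
        simp only [mul_assoc]
    _ = (q⁻¹) ^ d * (b * q ^ (d + 1)) := by
        rw [hb']
        have h1 : b * (q * b) * b = b * q := by
          calc b * (q * b) * b = b * q * (b * b) := by simp only [mul_assoc]
            _ = b * q := by rw [hb, mul_one]
        rw [h1, pow_succ']
        simp only [mul_assoc]
    _ = (q⁻¹) ^ d * ((q⁻¹) ^ (d + 1) * b) := by rw [comm_pow hq]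
    _ = (q⁻¹) ^ (2 * d + 1) * b := by
        rw [← mul_assoc, ← pow_add]
        have : d + (d + 1) = 2 * d + 1 := by omega
        rw [this]
    _ = b * q ^ (2 * d + 1) := (comm_pow hq _).symm
end grp

lemma ris_cons (i : B) (ω : List B) :
    ris (i :: ω) = ((π ω)⁻¹ * s i * π ω) :: ris ω := rfl

lemma ris_head (i j : B) (m : ℕ) :
    (π (alternatingWord i j m))⁻¹ * s (if Even m then j else i) * π (alternatingWord i j m)
      = π (alternatingWord i j (2 * m + 1)) := by
  have ha : s i * s i = 1 := cs.simple_mul_simple_self i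
  have hb : s j * s j = 1 := cs.simple_mul_simple_self j
  have ha' : (s i)⁻¹ = s i := cs.inv_simple i
  have hb' : (s j)⁻¹ = s j := cs.inv_simple j
  have hq : s j * (s i * s j) = (s i * s j)⁻¹ * s j := by
    rw [mul_inv_rev, ha', hb', mul_assoc]
  have hodd : ¬ Even (2 * m + 1) := by rw [Nat.even_iff]; omega
  rw [cs.prod_alternatingWord_eq_mul_pow, cs.prod_alternatingWord_eq_mul_pow]
  rw [if_neg hodd]
  have h2 : (2 * m + 1) / 2 = m := by omega
  rw [h2]
  rcases Nat.even_or_odd m with he | ho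
  · obtain ⟨d, rfl⟩ := he
    have hdd : d + d = 2 * d := by omega
    rw [if_pos (by exact ⟨d, rfl⟩), if_pos (by exact ⟨d, rfl⟩)]
    have h3 : (d + d) / 2 = d := by omega
    rw [h3, one_mul, hdd]
    exact key_even hq d
  · obtain ⟨d, rfl⟩ := ho
    have hne : ¬ Even (2 * d + 1) := by rw [Nat.even_iff]; omega
    rw [if_neg hne, if_neg hne]
    have h3 : (2 * d + 1) / 2 = d := by omega
    have hbqb : s i = (s i * s j) * s j := by rw [mul_assoc, hb, mul_one]
    rw [h3]
    have hk := key_odd hb hq d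
    rwa [← hbqb] at hk

lemma ris_alternatingWord (i j : B) (m : ℕ) :
    ris (alternatingWord i j m)
      = (range m).map (fun k => π (alternatingWord i j (2 * (m - k) - 1))) := by
  induction m with
  | zero => simp [alternatingWord]
  | succ m ih =>
    rw [alternatingWord_succ', ris_cons, ih, range_succ_eq_map]
    rw [map_cons]
    congr 1
    · rw [apply_ite cs.simple]
      have h := ris_head cs i j m
      rw [apply_ite cs.simple] at h
      have harg : 2 * (m + 1 - 0) - 1 = 2 * m + 1 := by omega
      rw [harg]
      exact h
    · rw [map_map]
      apply map_congr_left
      intro k hk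
      rw [mem_range] at hk
      simp only [Function.comp_apply]
      have harg : 2 * (m + 1 - Nat.succ k) - 1 = 2 * (m - k) - 1 := by omega
      rw [harg]

lemma act_mul_pow_eq_prod (i j : B) (m : ℕ) :
    (act cs i * act cs j) ^ m = ((alternatingWord i j (2 * m)).map (act cs)).prod := by
  induction m with
  | zero => simp [alternatingWord]
  | succ m ih =>
    have h2 : 2 * (m + 1) = (2 * m + 1) + 1 := by omega
    rw [h2, alternatingWord_succ', alternatingWord_succ']
    have : ¬ Even (2 * m + 1) := by rw [Nat.even_iff]; omega
    rw [if_neg this, if_pos (by exact ⟨m, by omega⟩)]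
    rw [map_cons, map_cons, prod_cons, prod_cons, ← ih, pow_succ']
    rw [← mul_assoc]

lemma two_mul_self_zmod2 (x : ZMod 2) : x + x = 0 := by
  have : x + x = 2 * x := by ring
  rw [this]
  have h2 : (2 : ZMod 2) = 0 := by decide
  rw [h2, zero_mul]

lemma prod_aW_add_period (i j : B) (n : ℕ) (hrel : (s i * s j) ^ M i j = 1) :
    π (alternatingWord i j (n + 2 * M i j)) = π (alternatingWord i j n) := by
  rw [cs.prod_alternatingWord_eq_mul_pow, cs.prod_alternatingWord_eq_mul_pow]
  have he : Even (n + 2 * M i j) ↔ Even n := by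
    rw [Nat.even_iff, Nat.even_iff]; omega
  have hd : (n + 2 * M i j) / 2 = n / 2 + M i j := by omega
  rw [hd, pow_add, hrel, mul_one]
  congr 1
  simp only [he]

lemma isLiftable_act : M.IsLiftable (act cs) := by
  intro i j
  let m := M i j
  have hm : m = M i j := rfl
  have hrel : (s i * s j) ^ m = 1 := cs.simple_mul_simple_pow i j
  rw [act_mul_pow_eq_prod]
  funext p
  obtain ⟨t, ε⟩ := p
  rw [act_wordProd]
  have hπ : π (alternatingWord i j (2 * m)) = 1 := by
    rw [cs.prod_alternatingWord_eq_mul_pow]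
    rw [if_pos (by exact ⟨m, by omega⟩)]
    have : 2 * m / 2 = m := by omega
    rw [this, one_mul, hrel]
  have hcnt : cnt (ris (alternatingWord i j (2 * m))) t = 0 := by
    rw [ris_alternatingWord]
    have h2m : 2 * m = m + m := by omega
    rw [h2m, range_add, map_append, map_map, cnt_append]
    have : (range m).map ((fun k => π (alternatingWord i j (2 * (m + m - k) - 1))) ∘ (fun k => m + k))
        = (range m).map (fun k => π (alternatingWord i j (2 * (m + m - k) - 1))) := by
      apply map_congr_left
      intro k hk
      rw [mem_range] at hk
      simp only [Function.comp_apply]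
      have harg : 2 * (m + m - (m + k)) - 1 = 2 * (m - k) - 1 := by omega
      have harg2 : 2 * (m + m - k) - 1 = (2 * (m - k) - 1) + 2 * m := by omega
      rw [harg, harg2]
      exact (prod_aW_add_period cs i j _ hrel).symm
    rw [this]
    exact two_mul_self_zmod2 _
  rw [hπ, hcnt, add_zero]
  have h1 : (1 : Function.End (W × ZMod 2)) (t, ε) = (t, ε) := rfl
  rw [h1]
  simp

/-- The reflection cocycle homomorphism. -/
noncomputable def rho : W →* Function.End (W × ZMod 2) :=
  cs.lift ⟨act cs, (isLiftable_act cs)⟩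

lemma rho_simple (i : B) : rho cs (s i) = act cs i :=
  cs.lift_apply_simple (isLiftable_act cs) i

lemma rho_wordProd (ω : List B) : rho cs (π ω) = (ω.map (act cs)).prod := by
  unfold CoxeterSystem.wordProd
  rw [map_list_prod, map_map]
  congr 1
  apply map_congr_left
  intro i _
  simp [Function.comp_apply, rho_simple]

lemma rho_apply (w t : W) (ε : ZMod 2) :
    rho cs w (t, ε) = (w * t * w⁻¹, ε + (rho cs w (t, 0)).2) := by
  obtain ⟨ω, rfl⟩ := cs.wordProd_surjective w
  rw [rho_wordProd, act_wordProd, act_wordProd, zero_add]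

/-- The reflection cocycle: parity of `t` in any left inversion sequence of `w`. -/
noncomputable def mu (w t : W) : ZMod 2 := (rho cs w⁻¹ (t, 0)).2

lemma mu_wordProd (ω : List B) (t : W) : mu cs (π ω) t = cnt (lis ω) t := by
  unfold mu
  rw [← cs.wordProd_reverse, rho_wordProd, act_wordProd, zero_add,
    cs.rightInvSeq_reverse, cnt_reverse]

lemma mu_mul (a b t : W) : mu cs (a * b) t = mu cs a t + mu cs b (a⁻¹ * t * a) := by
  unfold mu
  rw [mul_inv_rev, map_mul]
  show (rho cs b⁻¹ (rho cs a⁻¹ (t, 0))).2 = _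
  rw [rho_apply cs a⁻¹ t 0, zero_add]
  rw [rho_apply cs b⁻¹ _ _]
  simp only [inv_inv]

lemma mu_simple (i : B) (t : W) : mu cs (s i) t = if t = s i then 1 else 0 := by
  unfold mu
  rw [cs.inv_simple, rho_simple]
  show (s i * t * s i, (0 : ZMod 2) + if t = s i then 1 else 0).2 = _
  simp

end StmtSix

namespace StmtSix

open CoxeterSystem List

variable {B W : Type*} [Group W] {M : CoxeterMatrix B} (cs : CoxeterSystem M W)

local prefix:100 "ℓ" => cs.length
local prefix:100 "s" => cs.simple
local prefix:100 "π" => cs.wordProd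
local prefix:100 "ris" => cs.rightInvSeq
local prefix:100 "lis" => cs.leftInvSeq

lemma mu_one (t : W) : mu cs 1 t = 0 := by
  unfold mu
  rw [inv_one, map_one]
  rfl

lemma zmod2_cases (x : ZMod 2) : x = 0 ∨ x = 1 := by revert x; decide

lemma mu_inv_apply (u t : W) : mu cs u⁻¹ (u⁻¹ * t * u) = mu cs u t := by
  have h0 : mu cs (u * u⁻¹) t = 0 := by rw [mul_inv_cancel, mu_one]
  rw [mu_mul] at h0
  have := two_mul_self_zmod2 (mu cs u t)
  rcases zmod2_cases (mu cs u t) with h | h <;>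
    rcases zmod2_cases (mu cs u⁻¹ (u⁻¹ * t * u)) with h' | h' <;>
    rw [h, h'] at h0 ⊢ <;> simp_all

lemma mu_refl_self {t : W} (ht : cs.IsReflection t) : mu cs t t = 1 := by
  obtain ⟨u, i, rfl⟩ := ht
  have hsi : (s i)⁻¹ = s i := cs.inv_simple i
  rw [show u * s i * u⁻¹ = u * (s i * u⁻¹) by rw [mul_assoc]]
  rw [mu_mul, mu_mul]
  have e1 : u⁻¹ * (u * (s i * u⁻¹)) * u = s i := by group
  rw [e1, mu_simple, if_pos rfl]
  have e2 : (s i)⁻¹ * s i * s i = s i := by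
    rw [hsi, cs.simple_mul_simple_self, one_mul]
  rw [e2]
  have e3 : mu cs u⁻¹ (s i) = mu cs u (u * (s i * u⁻¹)) := by
    have := mu_inv_apply cs u (u * (s i * u⁻¹))
    rw [show u⁻¹ * (u * (s i * u⁻¹)) * u = s i by group] at this
    exact this
  rw [e3]
  rcases zmod2_cases (mu cs u (u * (s i * u⁻¹))) with h | h <;> rw [h] <;> decide

lemma isLeftInversion_of_mu {w t : W} (ht : cs.IsReflection t) (h : mu cs w t = 1) :
    cs.IsLeftInversion w t := by
  obtain ⟨ω, hω, rfl⟩ := cs.exists_reduced_word' w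
  rw [mu_wordProd] at h
  have hmem : t ∈ lis ω := cnt_ne_zero_mem (by rw [h]; exact one_ne_zero)
  exact cs.isLeftInversion_of_mem_leftInvSeq hω hmem

lemma isLeftInversion_iff_mu {w t : W} (ht : cs.IsReflection t) :
    cs.IsLeftInversion w t ↔ mu cs w t = 1 := by
  constructor
  · intro hinv
    rcases zmod2_cases (mu cs w t) with h | h
    · exfalso
      have htt : t⁻¹ * t * t = t := by rw [ht.inv, ht.mul_self, one_mul]
      have hmu : mu cs (t * w) t = 1 := by
        rw [mu_mul, htt, mu_refl_self cs ht, h, add_zero]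
      have hx := (isLeftInversion_of_mu cs ht hmu).2
      rw [← mul_assoc, ht.mul_self, one_mul] at hx
      have hy := hinv.2
      omega
    · exact h
  · exact isLeftInversion_of_mu cs ht

lemma strong_exchange {ω : List B} (hω : cs.IsReduced ω) {t : W} (ht : cs.IsReflection t)
    (h : ℓ (t * π ω) < ℓ (π ω)) : ∃ j, j < ω.length ∧ t * π ω = π (ω.eraseIdx j) := by
  have hmu : mu cs (π ω) t = 1 := (isLeftInversion_iff_mu cs ht).mp ⟨ht, h⟩
  rw [mu_wordProd] at hmu
  have hmem : t ∈ lis ω := cnt_ne_zero_mem (by rw [hmu]; exact one_ne_zero)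
  obtain ⟨j, hj, hgt⟩ := List.getElem_of_mem hmem
  rw [cs.length_leftInvSeq] at hj
  refine ⟨j, hj, ?_⟩
  have := cs.getD_leftInvSeq_mul_wordProd ω j
  rw [getD_eq_getElem _ _ (by rw [cs.length_leftInvSeq]; exact hj), hgt] at this
  exact this

/-! ### Weak order basics -/

lemma weakLE_refl (w : W) : weakLE cs w w := Relation.ReflTransGen.refl

lemma weakLE_trans {u v w : W} (h1 : weakLE cs u v) (h2 : weakLE cs v w) : weakLE cs u w :=
  Relation.ReflTransGen.trans h1 h2

lemma length_add_of_weakLE {u w : W} (h : weakLE cs u w) : ℓ u + ℓ (u⁻¹ * w) = ℓ w := by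
  induction h with
  | refl => simp
  | tail hab hbc ih =>
    rename_i b c
    obtain ⟨i, rfl, hlen⟩ := hbc
    have h1 : ℓ (u⁻¹ * (b * s i)) ≤ ℓ (u⁻¹ * b) + 1 := by
      rw [← mul_assoc]
      rcases cs.length_mul_simple (u⁻¹ * b) i with h | h <;> omega
    have h2 : ℓ (b * s i) ≤ ℓ u + ℓ (u⁻¹ * (b * s i)) := by
      have := cs.length_mul_le u (u⁻¹ * (b * s i))
      rw [← mul_assoc, mul_inv_cancel, one_mul] at this
      exact this
    omega

lemma weakLE_of_length_add {u w : W} (h : ℓ u + ℓ (u⁻¹ * w) = ℓ w) : weakLE cs u w := by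
  suffices H : ∀ (ω : List B) (u : W), cs.IsReduced ω → ℓ u + ω.length = ℓ (u * π ω) →
      weakLE cs u (u * π ω) by
    obtain ⟨ω, hlen, hval⟩ := cs.exists_reduced_word (u⁻¹ * w)
    have hred : cs.IsReduced ω := by
      show ℓ (π ω) = ω.length
      exact hlen
    have hw : w = u * π ω := by rw [← hval]; group
    have hgoal := H ω u hred (by rw [← hw, ← (hred : ℓ (π ω) = ω.length), ← hval]; exact h)
    rwa [← hw] at hgoal
  intro ω
  induction ω with
  | nil => intro u _ _; simpa using weakLE_refl cs u
  | cons i ω ih =>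
    intro u hred hlen
    rw [cs.wordProd_cons, ← mul_assoc] at hlen ⊢
    have hred' : cs.IsReduced ω := by
      have := CoxeterSystem.IsReduced.drop (ω := i :: ω) hred 1
      simpa using this
    have hlω : ℓ (π ω) = ω.length := hred'
    have hle : ℓ (u * s i * π ω) ≤ ℓ (u * s i) + ℓ (π ω) := cs.length_mul_le _ _
    have hsi_le : ℓ (u * s i) ≤ ℓ u + 1 := by
      rcases cs.length_mul_simple u i with h | h <;> omega
    have hlc : (i :: ω).length = ω.length + 1 := by simp
    rw [hlc] at hlen
    have hsi : ℓ (u * s i) = ℓ u + 1 := by omega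
    have htail : weakLE cs (u * s i) (u * s i * π ω) := ih (u * s i) hred' (by omega)
    exact Relation.ReflTransGen.head ⟨i, rfl, hsi⟩ htail

lemma weakLE_iff (u w : W) : weakLE cs u w ↔ ℓ u + ℓ (u⁻¹ * w) = ℓ w :=
  ⟨length_add_of_weakLE cs, weakLE_of_length_add cs⟩

lemma one_weakLE (w : W) : weakLE cs 1 w := by
  apply weakLE_of_length_add
  simp

lemma weakLE_antisymm {u w : W} (h1 : weakLE cs u w) (h2 : weakLE cs w u) : u = w := by
  have a1 := length_add_of_weakLE cs h1
  have a2 := length_add_of_weakLE cs h2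
  have b1 := cs.length_inv (u⁻¹ * w)
  have b2 : (u⁻¹ * w)⁻¹ = w⁻¹ * u := by group
  rw [b2] at b1
  have h0 : ℓ (u⁻¹ * w) = 0 := by omega
  exact inv_mul_eq_one.mp (cs.length_eq_zero_iff.mp h0)

lemma length_le_of_weakLE {u w : W} (h : weakLE cs u w) : ℓ u ≤ ℓ w := by
  have := length_add_of_weakLE cs h
  omega

lemma mu_disjoint {u v t : W} (ht : cs.IsReflection t) (huv : ℓ (u * v) = ℓ u + ℓ v) :
    ¬ (mu cs u t = 1 ∧ mu cs v (u⁻¹ * t * u) = 1) := by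
  rintro ⟨h1, h2⟩
  have l1 : ℓ (t * u) < ℓ u := (isLeftInversion_of_mu cs ht h1).2
  have hmu0 : mu cs (u * v) t = 0 := by
    rw [mu_mul, h1, h2]
    decide
  have hnotinv : ¬ cs.IsLeftInversion (u * v) t := by
    intro hinv
    rw [(isLeftInversion_iff_mu cs ht).mp hinv] at hmu0
    exact one_ne_zero hmu0
  have hge : ℓ (u * v) ≤ ℓ (t * (u * v)) := by
    by_contra hc
    exact hnotinv ⟨ht, by omega⟩
  have hle : ℓ (t * (u * v)) ≤ ℓ (t * u) + ℓ v := by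
    rw [← mul_assoc]
    exact cs.length_mul_le _ _
  omega

lemma mu_mono {u w t : W} (h : weakLE cs u w) (ht : cs.IsReflection t)
    (hmu : mu cs u t = 1) : mu cs w t = 1 := by
  have hadd := length_add_of_weakLE cs h
  have hw : w = u * (u⁻¹ * w) := by group
  have hdis := mu_disjoint cs ht (u := u) (v := u⁻¹ * w) (by rw [← hw]; omega)
  have h2 : mu cs (u⁻¹ * w) (u⁻¹ * t * u) = 0 := by
    rcases zmod2_cases (mu cs (u⁻¹ * w) (u⁻¹ * t * u)) with h' | h'
    · exact h'
    · exact absurd ⟨hmu, h'⟩ hdis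
  rw [hw, mu_mul, hmu, h2, add_zero]

lemma weakLE_of_mu_le {u w : W}
    (h : ∀ t, cs.IsReflection t → mu cs u t = 1 → mu cs w t = 1) : weakLE cs u w := by
  suffices H : ∀ n u w, ℓ u = n →
      (∀ t, cs.IsReflection t → mu cs u t = 1 → mu cs w t = 1) → weakLE cs u w from
    H (ℓ u) u w rfl h
  intro n
  induction n using Nat.strong_induction_on with
  | _ n ih =>
    intro u w hn hmu
    by_cases hu : u = 1
    · subst hu; exact one_weakLE cs w
    · obtain ⟨i, hi⟩ := cs.exists_leftDescent_of_ne_one hu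
      have hrefl := cs.isReflection_simple i
      have hsi : (s i)⁻¹ = s i := cs.inv_simple i
      have h1 : mu cs u (s i) = 1 :=
        (isLeftInversion_iff_mu cs hrefl).mp ⟨hrefl, hi⟩
      have h2 : mu cs w (s i) = 1 := hmu _ hrefl h1
      have hw : ℓ (s i * w) < ℓ w := (isLeftInversion_of_mu cs hrefl h2).2
      have hlu : ℓ (s i * u) + 1 = ℓ u := by
        rcases cs.length_simple_mul u i with h | h <;> unfold CoxeterSystem.IsLeftDescent at hi <;> omega
      have hlw : ℓ (s i * w) + 1 = ℓ w := by
        rcases cs.length_simple_mul w i with h | h <;> omega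
      have hmu' : ∀ t, cs.IsReflection t → mu cs (s i * u) t = 1 → mu cs (s i * w) t = 1 := by
        intro t ht hmut
        have expand : ∀ x : W, mu cs (s i * x) t = mu cs (s i) t + mu cs x (s i * t * s i) := by
          intro x
          rw [mu_mul, hsi]
        by_cases hts : t = s i
        · exfalso
          subst hts
          rw [expand, mu_simple, if_pos rfl] at hmut
          have : s i * s i * s i = s i := by rw [cs.simple_mul_simple_self]; group
          rw [this, h1] at hmut
          revert hmut; decide
        · rw [expand, mu_simple, if_neg hts, zero_add] at hmut
          have hconj : cs.IsReflection (s i * t * s i) := by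
            have := ht.conj (s i)
            rwa [hsi] at this
          have := hmu _ hconj (mu_mono cs (weakLE_refl cs u) hconj hmut)
          rw [expand, mu_simple, if_neg hts, zero_add]
          exact this
      have hless : ℓ (s i * u) < n := by omega
      have huw' : weakLE cs (s i * u) (s i * w) := ih _ hless _ _ rfl hmu'
      apply weakLE_of_length_add
      have hadd := length_add_of_weakLE cs huw'
      have e : (s i * u)⁻¹ * (s i * w) = u⁻¹ * w := by
        rw [mul_inv_rev, hsi, mul_assoc, ← mul_assoc (s i), cs.simple_mul_simple_self, one_mul]
      rw [e] at hadd
      omega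

end StmtSix

namespace StmtSix

open CoxeterSystem List

variable {B W : Type*} [Group W] {M : CoxeterMatrix B} (cs : CoxeterSystem M W) (K : Set B)

local prefix:100 "ℓ" => cs.length
local prefix:100 "s" => cs.simple
local prefix:100 "π" => cs.wordProd
local prefix:100 "lis" => cs.leftInvSeq

local notation "P" => Subgroup.closure (cs.simple '' K)

lemma mem_P_of_word {ω : List B} (hω : ∀ i ∈ ω, i ∈ K) : π ω ∈ P := by
  induction ω with
  | nil => simpa using one_mem _
  | cons i ω ih =>
    rw [cs.wordProd_cons]
    exact mul_mem (Subgroup.subset_closure ⟨i, hω i (mem_cons_self), rfl⟩)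
      (ih fun k hk => hω k (mem_cons_of_mem i hk))

lemma exists_word_of_mem_P {w : W} (hw : w ∈ P) :
    ∃ ω : List B, (∀ i ∈ ω, i ∈ K) ∧ w = π ω := by
  induction hw using Subgroup.closure_induction with
  | mem x hx =>
    obtain ⟨i, hi, rfl⟩ := hx
    exact ⟨[i], by simpa using hi, by simp⟩
  | one => exact ⟨[], by simp, by simp⟩
  | mul x y _ _ hx hy =>
    obtain ⟨ω₁, h1, rfl⟩ := hx
    obtain ⟨ω₂, h2, rfl⟩ := hy
    exact ⟨ω₁ ++ ω₂, by simp only [mem_append]; rintro i (h | h); exacts [h1 i h, h2 i h],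
      (cs.wordProd_append ω₁ ω₂).symm⟩
  | inv x _ hx =>
    obtain ⟨ω, h1, rfl⟩ := hx
    exact ⟨ω.reverse, fun i hi => h1 i (mem_reverse.mp hi), (cs.wordProd_reverse ω).symm⟩

lemma exists_reduced_word_of_mem_P {w : W} (hw : w ∈ P) :
    ∃ ω : List B, (∀ i ∈ ω, i ∈ K) ∧ cs.IsReduced ω ∧ w = π ω := by
  obtain ⟨ω, hK, rfl⟩ := exists_word_of_mem_P cs K hw
  clear hw
  induction ω with
  | nil => exact ⟨[], by simp, by simp [CoxeterSystem.IsReduced], by simp⟩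
  | cons i ω ih =>
    obtain ⟨κ, hκK, hκred, hκ⟩ := ih (fun k hk => hK k (mem_cons_of_mem i hk))
    have hiK : i ∈ K := hK i (mem_cons_self)
    have hred : ℓ (π κ) = κ.length := hκred
    rcases cs.length_simple_mul (π κ) i with h | h
    · refine ⟨i :: κ, ?_, ?_, ?_⟩
      · intro k hk
        rcases mem_cons.mp hk with rfl | hk
        exacts [hiK, hκK k hk]
      · show ℓ (π (i :: κ)) = (i :: κ).length
        rw [cs.wordProd_cons, h, hred]
        simp
      · rw [cs.wordProd_cons, cs.wordProd_cons, hκ]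
    · have hlt : ℓ (s i * π κ) < ℓ (π κ) := by
        have := cs.length_simple_mul_ne (π κ) i
        omega
      obtain ⟨j, hj, heq⟩ := strong_exchange cs hκred (cs.isReflection_simple i) hlt
      refine ⟨κ.eraseIdx j, ?_, ?_, ?_⟩
      · intro k hk
        exact hκK k (eraseIdx_subset hk)
      · show ℓ (π (κ.eraseIdx j)) = (κ.eraseIdx j).length
        have hlen := length_eraseIdx_add_one hj
        have hle := cs.length_wordProd_le (κ.eraseIdx j)
        rw [← heq]
        omega
      · rw [cs.wordProd_cons, hκ, heq]

lemma mem_P_of_mem_lis {ω : List B} (hω : ∀ i ∈ ω, i ∈ K) :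
    ∀ t ∈ lis ω, t ∈ P := by
  induction ω with
  | nil => intro t ht; simp [CoxeterSystem.leftInvSeq] at ht
  | cons i ω ih =>
    intro t ht
    have hlis : lis (i :: ω) = s i :: List.map (MulAut.conj (s i)) (lis ω) := rfl
    rw [hlis] at ht
    have hiP : s i ∈ P := Subgroup.subset_closure ⟨i, hω i (mem_cons_self), rfl⟩
    rcases mem_cons.mp ht with rfl | ht
    · exact hiP
    · obtain ⟨x, hx, rfl⟩ := mem_map.mp ht
      have hxP : x ∈ P := ih (fun k hk => hω k (mem_cons_of_mem i hk)) x hx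
      show s i * x * (s i)⁻¹ ∈ P
      exact mul_mem (mul_mem hiP hxP) (inv_mem hiP)

lemma mem_P_of_mu_one {v t : W} (hv : v ∈ P) (h : mu cs v t = 1) : t ∈ P := by
  obtain ⟨κ, hκK, hκred, rfl⟩ := exists_reduced_word_of_mem_P cs K hv
  rw [mu_wordProd] at h
  exact mem_P_of_mem_lis cs K hκK t (cnt_ne_zero_mem (by rw [h]; exact one_ne_zero))

lemma simple_mem_P_of_descent {v : W} (hv : v ∈ P) {i : B} (hlt : ℓ (s i * v) < ℓ v) :
    s i ∈ P ∧ s i * v ∈ P := by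
  obtain ⟨κ, hκK, hκred, rfl⟩ := exists_reduced_word_of_mem_P cs K hv
  obtain ⟨j, hj, heq⟩ := strong_exchange cs hκred (cs.isReflection_simple i) hlt
  have h1 : s i * π κ ∈ P := by
    rw [heq]
    exact mem_P_of_word cs K (fun k hk => hκK k (eraseIdx_subset hk))
  refine ⟨?_, h1⟩
  have : s i * π κ * (π κ)⁻¹ = s i := by group
  rw [← this]
  exact mul_mem h1 (inv_mem hv)

lemma mem_P_of_weakLE {z v : W} (h : weakLE cs z v) (hv : v ∈ P) : z ∈ P := by
  suffices H : ∀ n (z v : W), ℓ z = n → weakLE cs z v → v ∈ P → z ∈ P from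
    H (ℓ z) z v rfl h hv
  intro n
  induction n using Nat.strong_induction_on with
  | _ n ih =>
    intro z v hn h hv
    by_cases hz : z = 1
    · subst hz; exact one_mem _
    · obtain ⟨i, hi⟩ := cs.exists_leftDescent_of_ne_one hz
      have hrefl := cs.isReflection_simple i
      have h1 : mu cs z (s i) = 1 := (isLeftInversion_iff_mu cs hrefl).mp ⟨hrefl, hi⟩
      have h2 : mu cs v (s i) = 1 := mu_mono cs h hrefl h1
      have hvlt : ℓ (s i * v) < ℓ v := (isLeftInversion_of_mu cs hrefl h2).2
      obtain ⟨hsiP, hsvP⟩ := simple_mem_P_of_descent cs K hv hvlt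
      have hsi : (s i)⁻¹ = s i := cs.inv_simple i
      have hlz : ℓ (s i * z) + 1 = ℓ z := by
        rcases cs.length_simple_mul z i with h' | h' <;>
          unfold CoxeterSystem.IsLeftDescent at hi <;> omega
      have hlv : ℓ (s i * v) + 1 = ℓ v := by
        rcases cs.length_simple_mul v i with h' | h' <;> omega
      have hadd := length_add_of_weakLE cs h
      have hle' : weakLE cs (s i * z) (s i * v) := by
        apply weakLE_of_length_add
        have e : (s i * z)⁻¹ * (s i * v) = z⁻¹ * v := by
          rw [mul_inv_rev, hsi, mul_assoc, ← mul_assoc (s i), cs.simple_mul_simple_self, one_mul]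
        rw [e]
        omega
      have hzP : s i * z ∈ P := ih _ (by omega) _ _ rfl hle' hsvP
      have : s i * (s i * z) = z := by
        rw [← mul_assoc, cs.simple_mul_simple_self, one_mul]
      rw [← this]
      exact mul_mem hsiP hzP

lemma length_P_mul_min {c₀ : W} (hmin : ∀ q ∈ P, ℓ c₀ ≤ ℓ (q * c₀)) :
    ∀ p ∈ P, ℓ (p * c₀) = ℓ p + ℓ c₀ := by
  suffices H : ∀ n (p : W), ℓ p = n → p ∈ P → ℓ (p * c₀) = ℓ p + ℓ c₀ from
    fun p hp => H (ℓ p) p rfl hp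
  intro n
  induction n using Nat.strong_induction_on with
  | _ n ih =>
    intro p hn hp
    by_cases hp1 : p = 1
    · subst hp1; simp
    · obtain ⟨i, hi⟩ := cs.exists_leftDescent_of_ne_one hp1
      unfold CoxeterSystem.IsLeftDescent at hi
      obtain ⟨hsiP, hp'P⟩ := simple_mem_P_of_descent cs K hp hi
      have hsi : (s i)⁻¹ = s i := cs.inv_simple i
      have hlp : ℓ (s i * p) + 1 = ℓ p := by
        rcases cs.length_simple_mul p i with h' | h' <;> omega
      have ihp := ih (ℓ (s i * p)) (by omega) (s i * p) rfl hp'P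
      -- x = (s i * p) * c₀, need ℓ (s i * x) = ℓ x + 1
      set x := s i * p * c₀ with hx
      have hxval : s i * x = p * c₀ := by
        rw [hx, ← mul_assoc, ← mul_assoc, cs.simple_mul_simple_self, one_mul]
      rcases cs.length_simple_mul x i with h' | h'
    -- good case
      · rw [← hxval, h', ihp]; omega
      · exfalso
        -- strong exchange on x = π (κ ++ γ)
        obtain ⟨κ, hκK, hκred, hκ⟩ := exists_reduced_word_of_mem_P cs K hp'P
        obtain ⟨γ, hγlen, hγ⟩ := cs.exists_reduced_word c₀
        have hγlen : γ.length = ℓ c₀ := by rw [hγ]; exact hγlen.symm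
        have hκl : ℓ (π κ) = κ.length := hκred
        rw [← hκ] at hκl
        have hprod : π (κ ++ γ) = x := by rw [cs.wordProd_append, ← hκ, ← hγ]
        have hredκγ : cs.IsReduced (κ ++ γ) := by
          show ℓ (π (κ ++ γ)) = (κ ++ γ).length
          rw [hprod, hx, ihp, length_append]
          omega
        have hlt : ℓ (s i * π (κ ++ γ)) < ℓ (π (κ ++ γ)) := by
          rw [hprod]
          have := cs.length_simple_mul_ne x i
          omega
        obtain ⟨j, hj, heq⟩ := strong_exchange cs hredκγ (cs.isReflection_simple i) hlt
        rw [hprod, hxval] at heq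
        rw [length_append] at hj
        by_cases hjκ : j < κ.length
        · rw [eraseIdx_append_of_lt_length hjκ, cs.wordProd_append, ← hγ] at heq
          have hpeq : p = π (κ.eraseIdx j) := mul_right_cancel heq
          have hple := cs.length_wordProd_le (κ.eraseIdx j)
          have hel := length_eraseIdx_add_one hjκ
          rw [← hpeq] at hple
          omega
        · push_neg at hjκ
          rw [eraseIdx_append_of_length_le hjκ, cs.wordProd_append, ← hκ] at heq
          -- p * c₀ = (s i * p) * c₁
          have h3 : (s i * p)⁻¹ * (p * c₀) = π (γ.eraseIdx (j - κ.length)) := by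
            rw [heq]; group
          have heq2 : π (γ.eraseIdx (j - κ.length)) = ((s i * p)⁻¹ * p) * c₀ := by
            rw [← h3]; group
          have hqP : (s i * p)⁻¹ * p ∈ P := mul_mem (inv_mem hp'P) hp
          have hminq := hmin _ hqP
          rw [← heq2] at hminq
          have hc₁le := cs.length_wordProd_le (γ.eraseIdx (j - κ.length))
          have hjγ : j - κ.length < γ.length := by omega
          have hel := length_eraseIdx_add_one hjγ
          omega

end StmtSix

namespace StmtSix

open CoxeterSystem List

variable {B W : Type*} [Group W] {M : CoxeterMatrix B} (cs : CoxeterSystem M W) (K : Set B)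

local prefix:100 "ℓ" => cs.length
local prefix:100 "s" => cs.simple
local prefix:100 "π" => cs.wordProd

local notation "P" => Subgroup.closure (cs.simple '' K)

lemma exists_min_in_coset (c : W) :
    ∃ q₀ ∈ P, ∀ q ∈ P, ℓ (q₀ * c) ≤ ℓ (q * c) := by
  have hS : {n | ∃ q ∈ P, ℓ (q * c) = n}.Nonempty := ⟨ℓ (1 * c), 1, one_mem _, rfl⟩
  obtain ⟨q₀, hq₀, hq₀n⟩ := Nat.sInf_mem hS
  exact ⟨q₀, hq₀, fun q hq => by rw [hq₀n]; exact Nat.sInf_le ⟨q, hq, rfl⟩⟩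

lemma proj_coset_min {w u : W} (huP : u ∈ P)
    (hadd : ℓ w = ℓ u + ℓ (u⁻¹ * w))
    (hmax : ∀ v ∈ P, ℓ w = ℓ v + ℓ (v⁻¹ * w) → ℓ v ≤ ℓ u) :
    ∀ q ∈ P, ℓ (u⁻¹ * w) ≤ ℓ (q * (u⁻¹ * w)) := by
  set c := u⁻¹ * w with hc
  obtain ⟨q₀, hq₀P, hq₀min⟩ := exists_min_in_coset cs K c
  have hmin₀ : ∀ q ∈ P, ℓ (q₀ * c) ≤ ℓ (q * (q₀ * c)) := by
    intro q hq
    have := hq₀min (q * q₀) (mul_mem hq hq₀P)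
    rwa [mul_assoc] at this
  have hC1 := length_P_mul_min cs K hmin₀
  have hvP : u * q₀⁻¹ ∈ P := mul_mem huP (inv_mem hq₀P)
  have hw : w = (u * q₀⁻¹) * (q₀ * c) := by rw [hc]; group
  have hlen : ℓ w = ℓ (u * q₀⁻¹) + ℓ (q₀ * c) := by
    calc ℓ w = ℓ ((u * q₀⁻¹) * (q₀ * c)) := by rw [← hw]
      _ = ℓ (u * q₀⁻¹) + ℓ (q₀ * c) := hC1 _ hvP
  have hvinv : (u * q₀⁻¹)⁻¹ * w = q₀ * c := by rw [hc]; group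
  have hle := hmax (u * q₀⁻¹) hvP (by rw [hvinv]; exact hlen)
  intro q hq
  have h2 := hq₀min q hq
  omega

lemma mu_coset_zero {c : W} (hmin : ∀ q ∈ P, ℓ c ≤ ℓ (q * c)) {t : W}
    (ht : cs.IsReflection t) (htP : t ∈ P) : mu cs c t = 0 := by
  rcases zmod2_cases (mu cs c t) with h | h
  · exact h
  · exfalso
    have h1 := (isLeftInversion_of_mu cs ht h).2
    have h2 := hmin t htP
    omega

lemma exists_top [Finite W] : ∃ w₀ : W, ∀ t, cs.IsReflection t → mu cs w₀ t = 1 := by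
  haveI : Nonempty W := ⟨1⟩
  obtain ⟨w₀, hw₀⟩ := Finite.exists_max (fun w : W => ℓ w)
  refine ⟨w₀, fun t ht => ?_⟩
  have h1 := hw₀ (t * w₀)
  have h2 := ht.length_mul_right_ne w₀
  exact (isLeftInversion_iff_mu cs ht).mp ⟨ht, by omega⟩

lemma isReflection_conj_left {t : W} (ht : cs.IsReflection t) (g : W) :
    cs.IsReflection (g⁻¹ * t * g) := by
  have := ht.conj g⁻¹
  rwa [inv_inv] at this

end StmtSix

open StmtSix

/-- For a finite Coxeter system `(W,S)` and `K ⊆ S`, the projection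
`η : w ↦ w_K` onto the parabolic subgroup `W_K` (characterized by `η w ∈ W_K`,
`l(w) = l(η w) + l((η w)⁻¹ w)` with `l(η w)` maximal among such factorizations)
is a lattice homomorphism from the weak order on `W` onto the weak order on `W_K`:
it fixes `W_K` pointwise (hence is onto `W_K`) and preserves joins and meets. -/
theorem stmt_6 {B W : Type*} [Group W] [Finite W] {M : CoxeterMatrix B}
    (cs : CoxeterSystem M W) (K : Set B) (η : W → W)
    (hη : ∀ w : W, η w ∈ Subgroup.closure (cs.simple '' K) ∧
      cs.length w = cs.length (η w) + cs.length ((η w)⁻¹ * w) ∧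
      ∀ v ∈ Subgroup.closure (cs.simple '' K),
        cs.length w = cs.length v + cs.length (v⁻¹ * w) → cs.length v ≤ cs.length (η w)) :
    (∀ v ∈ Subgroup.closure (cs.simple '' K), η v = v) ∧
    (∀ x y j : W, isWeakJoin cs x y j → isWeakJoin cs (η x) (η y) (η j)) ∧
    (∀ x y m : W, isWeakMeet cs x y m → isWeakMeet cs (η x) (η y) (η m)) := by
  classical
  have hηP : ∀ w, η w ∈ Subgroup.closure (cs.simple '' K) := fun w => (hη w).1
  have hadd : ∀ w, cs.length w = cs.length (η w) + cs.length ((η w)⁻¹ * w) :=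
    fun w => (hη w).2.1
  have hmax : ∀ w, ∀ v ∈ Subgroup.closure (cs.simple '' K),
      cs.length w = cs.length v + cs.length (v⁻¹ * w) → cs.length v ≤ cs.length (η w) :=
    fun w => (hη w).2.2
  have hproj_le : ∀ w, weakLE cs (η w) w :=
    fun w => weakLE_of_length_add cs (hadd w).symm
  have hfix : ∀ v ∈ Subgroup.closure (cs.simple '' K), η v = v := by
    intro v hv
    have h1 := hadd v
    have h2 := hmax v v hv (by rw [inv_mul_cancel, cs.length_one, add_zero])
    have h0 : cs.length ((η v)⁻¹ * v) = 0 := by omega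
    exact inv_mul_eq_one.mp (cs.length_eq_zero_iff.mp h0)
  have hcmin : ∀ w, ∀ q ∈ Subgroup.closure (cs.simple '' K),
      cs.length ((η w)⁻¹ * w) ≤ cs.length (q * ((η w)⁻¹ * w)) :=
    fun w => proj_coset_min cs K (hηP w) (hadd w) (hmax w)
  have hmuproj : ∀ w t, cs.IsReflection t → t ∈ Subgroup.closure (cs.simple '' K) →
      mu cs w t = mu cs (η w) t := by
    intro w t ht htP
    have hconj : cs.IsReflection ((η w)⁻¹ * t * η w) := isReflection_conj_left cs ht (η w)
    have hconjP : (η w)⁻¹ * t * η w ∈ Subgroup.closure (cs.simple '' K) :=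
      mul_mem (mul_mem (inv_mem (hηP w)) htP) (hηP w)
    have h0 : mu cs ((η w)⁻¹ * w) ((η w)⁻¹ * t * η w) = 0 :=
      mu_coset_zero cs K (hcmin w) hconj hconjP
    conv_lhs => rw [show w = η w * ((η w)⁻¹ * w) by group]
    rw [mu_mul, h0, add_zero]
  have hle_proj : ∀ v w, v ∈ Subgroup.closure (cs.simple '' K) → weakLE cs v w →
      weakLE cs v (η w) := by
    intro v w hv hvw
    apply weakLE_of_mu_le
    intro t ht hmuv
    have htP := mem_P_of_mu_one cs K hv hmuv
    have h1 := mu_mono cs hvw ht hmuv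
    rwa [hmuproj w t ht htP] at h1
  refine ⟨hfix, ?_, ?_⟩
  · -- joins
    rintro x y j ⟨hxj, hyj, huniv⟩
    have hηxj : weakLE cs (η x) (η j) :=
      hle_proj _ _ (hηP x) (weakLE_trans cs (hproj_le x) hxj)
    have hηyj : weakLE cs (η y) (η j) :=
      hle_proj _ _ (hηP y) (weakLE_trans cs (hproj_le y) hyj)
    refine ⟨hηxj, hηyj, ?_⟩
    intro z hxz hyz
    -- package the top-element coset facts
    have htopfact : ∃ c₀ : W, (∀ q ∈ Subgroup.closure (cs.simple '' K),
          cs.length c₀ ≤ cs.length (q * c₀)) ∧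
        (∀ t', cs.IsReflection t' → t' ∉ Subgroup.closure (cs.simple '' K) →
          mu cs c₀ t' = 1) := by
      obtain ⟨w₀, hw₀⟩ := exists_top cs
      refine ⟨(η w₀)⁻¹ * w₀, hcmin w₀, ?_⟩
      intro t' ht' ht'P
      have httop : cs.IsReflection (η w₀ * t' * (η w₀)⁻¹) := ht'.conj (η w₀)
      have h1 : mu cs w₀ (η w₀ * t' * (η w₀)⁻¹) = 1 := hw₀ _ httop
      have hdec := mu_mul cs (η w₀) ((η w₀)⁻¹ * w₀) (η w₀ * t' * (η w₀)⁻¹)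
      rw [show η w₀ * ((η w₀)⁻¹ * w₀) = w₀ by group] at hdec
      rw [show (η w₀)⁻¹ * (η w₀ * t' * (η w₀)⁻¹) * η w₀ = t' by group] at hdec
      have hu₀0 : mu cs (η w₀) (η w₀ * t' * (η w₀)⁻¹) = 0 := by
        rcases zmod2_cases (mu cs (η w₀) (η w₀ * t' * (η w₀)⁻¹)) with h | h
        · exact h
        · exfalso
          apply ht'P
          have hmem := mem_P_of_mu_one cs K (hηP w₀) h
          have he : t' = (η w₀)⁻¹ * (η w₀ * t' * (η w₀)⁻¹) * η w₀ := by group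
          rw [he]
          exact mul_mem (mul_mem (inv_mem (hηP w₀)) hmem) (hηP w₀)
      rw [hdec, hu₀0, zero_add] at h1
      exact h1
    obtain ⟨c₀, hc₀min, hc₀top⟩ := htopfact
    have hxj' : weakLE cs (η x) (η z) := hle_proj _ _ (hηP x) hxz
    have hyj' : weakLE cs (η y) (η z) := hle_proj _ _ (hηP y) hyz
    -- key claim
    have hkey : ∀ v : W,
        (∀ t, cs.IsReflection t → t ∈ Subgroup.closure (cs.simple '' K) →
          mu cs v t = 1 → mu cs (η z) t = 1) →
        weakLE cs v (η z * c₀) := by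
      intro v hv
      apply weakLE_of_mu_le
      intro t ht hmuv
      rw [mu_mul]
      have hconj : cs.IsReflection ((η z)⁻¹ * t * η z) := isReflection_conj_left cs ht (η z)
      by_cases htP : t ∈ Subgroup.closure (cs.simple '' K)
      · have hconjP : (η z)⁻¹ * t * η z ∈ Subgroup.closure (cs.simple '' K) :=
          mul_mem (mul_mem (inv_mem (hηP z)) htP) (hηP z)
        rw [mu_coset_zero cs K hc₀min hconj hconjP, add_zero]
        exact hv t ht htP hmuv
      · have hj'0 : mu cs (η z) t = 0 := by
          rcases zmod2_cases (mu cs (η z) t) with h | h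
          · exact h
          · exact absurd (mem_P_of_mu_one cs K (hηP z) h) htP
        have ht'P : (η z)⁻¹ * t * η z ∉ Subgroup.closure (cs.simple '' K) := by
          intro hmem
          apply htP
          have he : t = η z * ((η z)⁻¹ * t * η z) * (η z)⁻¹ := by group
          rw [he]
          exact mul_mem (mul_mem (hηP z) hmem) (inv_mem (hηP z))
        rw [hj'0, hc₀top _ hconj ht'P, zero_add]
    have hxZ : weakLE cs x (η z * c₀) := by
      apply hkey
      intro t ht htP hmu
      have h1 : mu cs (η x) t = 1 := by rw [← hmuproj x t ht htP]; exact hmu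
      exact mu_mono cs hxj' ht h1
    have hyZ : weakLE cs y (η z * c₀) := by
      apply hkey
      intro t ht htP hmu
      have h1 : mu cs (η y) t = 1 := by rw [← hmuproj y t ht htP]; exact hmu
      exact mu_mono cs hyj' ht h1
    have hjZ : weakLE cs j (η z * c₀) := huniv _ hxZ hyZ
    have hfinal : weakLE cs (η j) (η z) := by
      apply weakLE_of_mu_le
      intro t ht hmu
      have htP := mem_P_of_mu_one cs K (hηP j) hmu
      have hmuj : mu cs j t = 1 := by rw [hmuproj j t ht htP]; exact hmu
      have hmuZ : mu cs (η z * c₀) t = 1 := mu_mono cs hjZ ht hmuj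
      rw [mu_mul] at hmuZ
      have hconj : cs.IsReflection ((η z)⁻¹ * t * η z) := isReflection_conj_left cs ht (η z)
      have hconjP : (η z)⁻¹ * t * η z ∈ Subgroup.closure (cs.simple '' K) :=
        mul_mem (mul_mem (inv_mem (hηP z)) htP) (hηP z)
      rwa [mu_coset_zero cs K hc₀min hconj hconjP, add_zero] at hmuZ
    exact weakLE_trans cs hfinal (hproj_le z)
  · -- meets
    rintro x y m ⟨hmx, hmy, huniv⟩
    have h1 : weakLE cs (η m) (η x) :=
      hle_proj _ _ (hηP m) (weakLE_trans cs (hproj_le m) hmx)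
    have h2 : weakLE cs (η m) (η y) :=
      hle_proj _ _ (hηP m) (weakLE_trans cs (hproj_le m) hmy)
    refine ⟨h1, h2, ?_⟩
    intro z hz1 hz2
    have hzP : z ∈ Subgroup.closure (cs.simple '' K) := mem_P_of_weakLE cs K hz1 (hηP x)
    have hzx : weakLE cs z x := weakLE_trans cs hz1 (hproj_le x)
    have hzy : weakLE cs z y := weakLE_trans cs hz2 (hproj_le y)
    exact hle_proj z m hzP (huniv z hzx hzy)
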